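/- Let R be a prime centrally closed ring with center C a field, and let S be a simple C-algebra. Then every nonzero two-sided ideal of R ⊗_C S intersects R ⊗ 1 nontrivially; consequently R ⊗_C S is a prime ring. -/

import Mathlib

open TensorProduct

section Sandwich
variable {T : Type*} [Ring T]

/-- Finite sum `∑ aᵢ * t * bᵢ` indexed by a list of pairs. -/
def sandwich (t : T) (l : List (T × T)) : T := (l.map fun p => p.1 * t * p.2).sum

@[simp] lemma sandwich_nil (t : T) : sandwich t ([] : List (T × T)) = 0 := rfl

lemma sandwich_cons (t : T) (p : T × T) (l : List (T × T)) :
    sandwich t (p :: l) = p.1 * t * p.2 + sandwich t l := by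
  simp [sandwich]

lemma sandwich_append (t : T) (l₁ l₂ : List (T × T)) :
    sandwich t (l₁ ++ l₂) = sandwich t l₁ + sandwich t l₂ := by
  simp [sandwich]

@[simp] lemma sandwich_zero (l : List (T × T)) : sandwich (0 : T) l = 0 := by
  induction l with
  | nil => rfl
  | cons p l ih => rw [sandwich_cons, ih, mul_zero, zero_mul, add_zero]

lemma sandwich_neg_left (t : T) (l : List (T × T)) :
    sandwich t (l.map fun p => (-p.1, p.2)) = -sandwich t l := by
  induction l with
  | nil => simp
  | cons p l ih => simp only [List.map_cons, sandwich_cons, ih, neg_mul, neg_add]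

lemma sandwich_mul_left (t r : T) (l : List (T × T)) :
    sandwich t (l.map fun p => (r * p.1, p.2)) = r * sandwich t l := by
  induction l with
  | nil => simp
  | cons p l ih => simp only [List.map_cons, sandwich_cons, ih, mul_add, mul_assoc]

lemma sandwich_mul_right (t r : T) (l : List (T × T)) :
    sandwich t (l.map fun p => (p.1, p.2 * r)) = sandwich t l * r := by
  induction l with
  | nil => simp
  | cons p l ih => simp only [List.map_cons, sandwich_cons, ih, add_mul, mul_assoc]

lemma sandwich_single (t : T) : sandwich t [((1 : T), (1 : T))] = t := by
  simp [sandwich]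

lemma sandwich_mem (I : TwoSidedIdeal T) {t : T} (ht : t ∈ I) (l : List (T × T)) :
    sandwich t l ∈ I := by
  induction l with
  | nil => exact I.zero_mem
  | cons p l ih =>
    rw [sandwich_cons]
    exact I.add_mem (I.mul_mem_right _ _ (I.mul_mem_left _ _ ht)) ih

/-- The two-sided ideal generated by `t`, as the set of finite sums `∑ aᵢ t bᵢ`. -/
def genIdeal (t : T) : TwoSidedIdeal T :=
  TwoSidedIdeal.mk' {x | ∃ l : List (T × T), x = sandwich t l}
    ⟨[], rfl⟩
    (fun {x y} hx hy => by
      obtain ⟨l₁, rfl⟩ := hx; obtain ⟨l₂, rfl⟩ := hy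
      exact ⟨l₁ ++ l₂, (sandwich_append t l₁ l₂).symm⟩)
    (fun {x} hx => by
      obtain ⟨l, rfl⟩ := hx
      exact ⟨l.map fun p => (-p.1, p.2), (sandwich_neg_left t l).symm⟩)
    (fun {x y} hy => by
      obtain ⟨l, rfl⟩ := hy
      exact ⟨l.map fun p => (x * p.1, p.2), (sandwich_mul_left t x l).symm⟩)
    (fun {x y} hx => by
      obtain ⟨l, rfl⟩ := hx
      exact ⟨l.map fun p => (p.1, p.2 * y), (sandwich_mul_right t y l).symm⟩)

lemma mem_genIdeal {t x : T} : x ∈ genIdeal t ↔ ∃ l : List (T × T), x = sandwich t l :=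
  TwoSidedIdeal.mem_mk' _ _ _ _ _ _ x

lemma self_mem_genIdeal (t : T) : t ∈ genIdeal t :=
  mem_genIdeal.2 ⟨[((1 : T), (1 : T))], (sandwich_single t).symm⟩

lemma genIdeal_ne_bot {t : T} (ht : t ≠ 0) : genIdeal t ≠ ⊥ := by
  intro h
  exact ht ((TwoSidedIdeal.mem_bot T).1 (h ▸ self_mem_genIdeal t))

end Sandwich

section Coord

variable (C : Type*) {R S : Type*} [Field C] [Ring R] [Algebra C R] [Ring S] [Algebra C S]
variable [DecidableEq ↑(Module.Basis.ofVectorSpaceIndex C S)]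

/-- Coordinates of `R ⊗[C] S` with respect to a basis of `S`. -/
noncomputable def coordEquiv :
    R ⊗[C] S ≃ₗ[C] (↑(Module.Basis.ofVectorSpaceIndex C S) →₀ R) :=
  (TensorProduct.congr (LinearEquiv.refl C R) (Module.Basis.ofVectorSpace C S).repr).trans
    (TensorProduct.finsuppScalarRight C C R _)

lemma coordEquiv_tmul (r : R) (s : S) (i : ↑(Module.Basis.ofVectorSpaceIndex C S)) :
    coordEquiv C (r ⊗ₜ[C] s) i = (Module.Basis.ofVectorSpace C S).repr s i • r := by
  simp only [coordEquiv, LinearEquiv.trans_apply, TensorProduct.congr_tmul,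
    LinearEquiv.refl_apply]
  rw [TensorProduct.finsuppScalarRight_apply_tmul_apply]

lemma coordEquiv_symm_single (i : ↑(Module.Basis.ofVectorSpaceIndex C S)) (r : R) :
    (coordEquiv C).symm (Finsupp.single i r) = r ⊗ₜ[C] (Module.Basis.ofVectorSpace C S i : S) := by
  rw [LinearEquiv.symm_apply_eq]
  ext j
  rw [coordEquiv_tmul, Module.Basis.repr_self]
  rcases eq_or_ne i j with rfl | h
  · simp
  · rw [Finsupp.single_eq_of_ne' h, Finsupp.single_eq_of_ne' h, zero_smul]

lemma coordEquiv_sum (u : R ⊗[C] S) :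
    u = ∑ i ∈ (coordEquiv C u).support,
      (coordEquiv C u i) ⊗ₜ[C] (Module.Basis.ofVectorSpace C S i : S) := by
  conv_lhs => rw [← LinearEquiv.symm_apply_apply (coordEquiv C) u,
    ← Finsupp.sum_single (coordEquiv C u)]
  rw [map_finsuppSum, Finsupp.sum]
  exact Finset.sum_congr rfl fun i _ => coordEquiv_symm_single C i _

lemma coordEquiv_conj (x y : R) (u : R ⊗[C] S) (i : ↑(Module.Basis.ofVectorSpaceIndex C S)) :
    coordEquiv C ((x ⊗ₜ[C] (1 : S)) * u * (y ⊗ₜ[C] (1 : S))) i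
      = x * coordEquiv C u i * y := by
  induction u with
  | zero => simp
  | tmul r s =>
      rw [Algebra.TensorProduct.tmul_mul_tmul, Algebra.TensorProduct.tmul_mul_tmul,
        one_mul, mul_one, coordEquiv_tmul, coordEquiv_tmul, mul_smul_comm, smul_mul_assoc]
  | add u v hu hv =>
      rw [mul_add, add_mul, map_add, Finsupp.add_apply, hu, hv, map_add, Finsupp.add_apply,
        mul_add, add_mul]

lemma coordEquiv_sandwich (u : R ⊗[C] S) (l : List (R × R))
    (i : ↑(Module.Basis.ofVectorSpaceIndex C S)) :
    coordEquiv C (sandwich u (l.map fun p => (p.1 ⊗ₜ[C] (1 : S), p.2 ⊗ₜ[C] (1 : S)))) i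
      = sandwich (coordEquiv C u i) l := by
  induction l with
  | nil => simp
  | cons p l ih =>
      rw [List.map_cons, sandwich_cons, sandwich_cons, map_add, Finsupp.add_apply, ih,
        coordEquiv_conj]

lemma tmul_one_eq_zero_iff [Nontrivial S] (r : R) : r ⊗ₜ[C] (1 : S) = 0 ↔ r = 0 := by
  constructor
  · intro h
    have h1 : (Module.Basis.ofVectorSpace C S).repr 1 ≠ 0 := by
      intro h2
      have h3 := congrArg (Module.Basis.ofVectorSpace C S).repr.symm h2
      rw [LinearEquiv.symm_apply_apply, map_zero] at h3
      exact one_ne_zero h3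
    obtain ⟨i, hi⟩ : ∃ i, (Module.Basis.ofVectorSpace C S).repr 1 i ≠ 0 := by
      by_contra hc; push_neg at hc; exact h1 (Finsupp.ext hc)
    have h0 : (Module.Basis.ofVectorSpace C S).repr 1 i • r = 0 := by
      rw [← coordEquiv_tmul C r 1 i, h]; simp
    have h4 : r = (((Module.Basis.ofVectorSpace C S).repr 1 i)⁻¹
        * (Module.Basis.ofVectorSpace C S).repr 1 i) • r := by
      rw [inv_mul_cancel₀ hi, one_smul]
    rw [h4, mul_smul, h0, smul_zero]
  · rintro rfl; exact TensorProduct.zero_tmul _ _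

lemma sandwich_tmul_right (r : R) (s : S) (l : List (S × S)) :
    sandwich (r ⊗ₜ[C] s) (l.map fun p => ((1 : R) ⊗ₜ[C] p.1, (1 : R) ⊗ₜ[C] p.2))
      = r ⊗ₜ[C] (sandwich s l) := by
  induction l with
  | nil => simp
  | cons p l ih =>
      rw [List.map_cons, sandwich_cons, sandwich_cons, ih,
        Algebra.TensorProduct.tmul_mul_tmul, Algebra.TensorProduct.tmul_mul_tmul,
        one_mul, mul_one, TensorProduct.tmul_add]

lemma sandwich_tmul_left (a : R) (l : List (R × R)) :
    sandwich (a ⊗ₜ[C] (1 : S)) (l.map fun p => (p.1 ⊗ₜ[C] (1 : S), p.2 ⊗ₜ[C] (1 : S)))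
      = (sandwich a l) ⊗ₜ[C] (1 : S) := by
  induction l with
  | nil => simp
  | cons p l ih =>
      rw [List.map_cons, sandwich_cons, sandwich_cons, ih,
        Algebra.TensorProduct.tmul_mul_tmul, Algebra.TensorProduct.tmul_mul_tmul,
        one_mul, one_mul, TensorProduct.add_tmul]

end Coord

/-- `f : R → R` restricts to an `(R,R)`-bimodule map on the two-sided ideal `I`. -/
def IsBimodOn {R : Type*} [Ring R] (I : TwoSidedIdeal R) (f : R → R) : Prop :=
  (∀ x ∈ I, ∀ y ∈ I, f (x + y) = f x + f y) ∧
  (∀ r : R, ∀ x ∈ I, f (r * x) = r * f x) ∧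
  (∀ r : R, ∀ x ∈ I, f (x * r) = f x * r)

/-- A ring is prime if the product of any two nonzero two-sided ideals is nonzero
(in particular the ring is nonzero). -/
def IsPrimeRing (T : Type*) [Ring T] : Prop :=
  Nontrivial T ∧
    ∀ A B : TwoSidedIdeal T, A ≠ ⊥ → B ≠ ⊥ → ∃ a ∈ A, ∃ b ∈ B, a * b ≠ 0

/-- Let `R` be a prime centrally closed ring with center the field `C`, and let `S` be
a simple `C`-algebra. Then every nonzero two-sided ideal of `R ⊗[C] S` meets `R ⊗ 1`
nontrivially; consequently `R ⊗[C] S` is a prime ring. -/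
theorem tensor_with_simple_is_prime
    {C R S : Type*} [Field C] [Ring R] [Nontrivial R] [Algebra C R] [Ring S]
    [Nontrivial S] [Algebra C S]
    (hcenter : Set.range (algebraMap C R) = (Subring.center R : Set R))
    (hprime : IsPrimeRing R)
    (hclosed : ∀ I : TwoSidedIdeal R, I ≠ ⊥ → ∀ f : R → R, IsBimodOn I f →
      ∃ c : C, ∀ x ∈ I, f x = algebraMap C R c * x)
    (hsimple : ∀ J : TwoSidedIdeal S, J = ⊥ ∨ J = ⊤) :
    (∀ J : TwoSidedIdeal (R ⊗[C] S), J ≠ ⊥ →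
        ∃ r : R, r ≠ 0 ∧ r ⊗ₜ[C] (1 : S) ∈ J) ∧
      IsPrimeRing (R ⊗[C] S) := by
  classical
  have main : ∀ J : TwoSidedIdeal (R ⊗[C] S), J ≠ ⊥ →
      ∃ r : R, r ≠ 0 ∧ r ⊗ₜ[C] (1 : S) ∈ J := by
    intro J hJ
    have hex : ∃ m : ℕ, ∃ u, u ∈ J ∧ u ≠ 0 ∧ (coordEquiv C u).support.card = m := by
      obtain ⟨u0, hu0J, hu00⟩ : ∃ u, u ∈ J ∧ u ≠ 0 := by
        by_contra hc; push_neg at hc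
        exact hJ (SetLike.ext fun x =>
          ⟨fun hx => (TwoSidedIdeal.mem_bot _).2 (hc x hx),
           fun hx => by rw [(TwoSidedIdeal.mem_bot _).1 hx]; exact J.zero_mem⟩)
      exact ⟨_, u0, hu0J, hu00, rfl⟩
    obtain ⟨u, huJ, hu0, hcard⟩ := Nat.find_spec hex
    have hmin : ∀ v ∈ J, (coordEquiv C v).support.card < Nat.find hex → v = 0 := by
      intro v hvJ hlt
      by_contra hv0
      exact Nat.find_min hex hlt ⟨v, hvJ, hv0, rfl⟩
    have hne : (coordEquiv C u).support.Nonempty := by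
      rw [Finsupp.support_nonempty_iff]
      intro h
      exact hu0 (by simpa using congrArg (coordEquiv C).symm h)
    obtain ⟨i0, hi0⟩ := hne
    have hr1 : coordEquiv C u i0 ≠ 0 := Finsupp.mem_support_iff.1 hi0
    set r₁ := coordEquiv C u i0 with hr1def
    have B1 : ∀ l : List (R × R), sandwich r₁ l = 0 →
        ∀ i, sandwich (coordEquiv C u i) l = 0 := by
      intro l hl i
      set v := sandwich u (l.map fun p => (p.1 ⊗ₜ[C] (1 : S), p.2 ⊗ₜ[C] (1 : S))) with hv
      have hvJ : v ∈ J := sandwich_mem J huJ _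
      have hco : ∀ j, coordEquiv C v j = sandwich (coordEquiv C u j) l :=
        fun j => coordEquiv_sandwich C u l j
      have hsub : (coordEquiv C v).support ⊆ (coordEquiv C u).support.erase i0 := by
        intro j hj
        have hj' : coordEquiv C v j ≠ 0 := Finsupp.mem_support_iff.1 hj
        rw [Finset.mem_erase]
        refine ⟨?_, ?_⟩
        · intro hji0
          apply hj'
          rw [hco j, hji0, ← hr1def]
          exact hl
        · rw [Finsupp.mem_support_iff]
          intro h0
          apply hj'
          rw [hco j, h0, sandwich_zero]
      have hlt : (coordEquiv C v).support.card < Nat.find hex := by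
        calc (coordEquiv C v).support.card
            ≤ ((coordEquiv C u).support.erase i0).card := Finset.card_le_card hsub
          _ < (coordEquiv C u).support.card := Finset.card_erase_lt_of_mem hi0
          _ = Nat.find hex := hcard
      have hv0 := hmin v hvJ hlt
      rw [← hco i, hv0]
      simp
    have key : ∀ i, ∃ c : C, coordEquiv C u i = algebraMap C R c * r₁ := by
      intro i
      set g : R → R := fun x =>
        if h : ∃ l : List (R × R), x = sandwich r₁ l then
          sandwich (coordEquiv C u i) h.choose
        else 0 with hg
      have gspec : ∀ l : List (R × R),
          g (sandwich r₁ l) = sandwich (coordEquiv C u i) l := by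
        intro l
        have hexl : ∃ l' : List (R × R), sandwich r₁ l = sandwich r₁ l' := ⟨l, rfl⟩
        rw [hg]
        simp only [dif_pos hexl]
        have h1 : sandwich r₁ (hexl.choose ++ l.map fun p => (-p.1, p.2)) = 0 := by
          rw [sandwich_append, sandwich_neg_left, ← hexl.choose_spec, add_neg_cancel]
        have h2 := B1 _ h1 i
        rw [sandwich_append, sandwich_neg_left] at h2
        exact add_neg_eq_zero.1 h2
      have gbm : IsBimodOn (genIdeal r₁) g := by
        refine ⟨?_, ?_, ?_⟩
        · intro x hx y hy
          obtain ⟨lx, rfl⟩ := mem_genIdeal.1 hx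
          obtain ⟨ly, rfl⟩ := mem_genIdeal.1 hy
          rw [← sandwich_append, gspec, gspec, gspec, sandwich_append]
        · intro r x hx
          obtain ⟨lx, rfl⟩ := mem_genIdeal.1 hx
          rw [← sandwich_mul_left, gspec, gspec, sandwich_mul_left]
        · intro r x hx
          obtain ⟨lx, rfl⟩ := mem_genIdeal.1 hx
          rw [← sandwich_mul_right, gspec, gspec, sandwich_mul_right]
      obtain ⟨c, hc⟩ := hclosed (genIdeal r₁) (genIdeal_ne_bot hr1) g gbm
      refine ⟨c, ?_⟩
      have h5 := hc r₁ (self_mem_genIdeal r₁)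
      have h6 : g r₁ = coordEquiv C u i := by
        conv_lhs => rw [← sandwich_single r₁]
        rw [gspec, sandwich_single]
      rw [← h6]
      exact h5
    choose cf hcf using key
    set s : S := ∑ i ∈ (coordEquiv C u).support,
      cf i • (Module.Basis.ofVectorSpace C S i : S) with hs
    have hus : u = r₁ ⊗ₜ[C] s := by
      conv_lhs => rw [coordEquiv_sum C u]
      rw [hs, TensorProduct.tmul_sum]
      refine Finset.sum_congr rfl fun i _ => ?_
      have h7 : coordEquiv C u i = cf i • r₁ := by rw [hcf i, Algebra.smul_def]
      rw [h7, TensorProduct.smul_tmul]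
    have hsne : s ≠ 0 := by
      intro h0
      rw [h0, TensorProduct.tmul_zero] at hus
      exact hu0 hus
    obtain ⟨ls, hls⟩ : ∃ l : List (S × S), (1 : S) = sandwich s l := by
      rcases hsimple (genIdeal s) with h | h
      · exact absurd h (genIdeal_ne_bot hsne)
      · refine mem_genIdeal.1 ?_
        rw [h]
        trivial
    refine ⟨r₁, hr1, ?_⟩
    have hfin : r₁ ⊗ₜ[C] (1 : S) =
        sandwich u (ls.map fun p => ((1 : R) ⊗ₜ[C] p.1, (1 : R) ⊗ₜ[C] p.2)) := by
      rw [hus, sandwich_tmul_right, ← hls]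
    rw [hfin]
    exact sandwich_mem J huJ _
  obtain ⟨-, hp2⟩ := hprime
  refine ⟨main, ⟨1, 0, ?_⟩, ?_⟩
  · rw [Algebra.TensorProduct.one_def]
    intro h
    exact one_ne_zero ((tmul_one_eq_zero_iff C (1 : R)).1 h)
  · intro A B hA hB
    obtain ⟨a, ha0, haA⟩ := main A hA
    obtain ⟨b, hb0, hbB⟩ := main B hB
    obtain ⟨x, hxA, y, hyB, hxy⟩ := hp2 (genIdeal a) (genIdeal b)
      (genIdeal_ne_bot ha0) (genIdeal_ne_bot hb0)
    obtain ⟨lx, rfl⟩ := mem_genIdeal.1 hxA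
    obtain ⟨ly, rfl⟩ := mem_genIdeal.1 hyB
    refine ⟨(sandwich a lx) ⊗ₜ[C] (1 : S), ?_, (sandwich b ly) ⊗ₜ[C] (1 : S), ?_, ?_⟩
    · rw [← sandwich_tmul_left]
      exact sandwich_mem A haA _
    · rw [← sandwich_tmul_left]
      exact sandwich_mem B hbB _
    · rw [Algebra.TensorProduct.tmul_mul_tmul, one_mul]
      intro h
      exact hxy ((tmul_one_eq_zero_iff C _).1 h)
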